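/- Global maximizers are fixed points: Assume each diagonal block C_{ii} of C is positive semidefinite, and let Ĝ ∈ O(d)^{⊗n} be a global maximizer of (QP). Then C_iᵀ Ĝ Ĝ_iᵀ − C_{ii} is positive semidefinite for every i ∈ [n], and Ĝ is a fixed point of T_α for every α ≥ 0 (i.e. Ĝ ∈ T_α(Ĝ) for all α ≥ 0). -/

import Mathlib

open Matrix BigOperators

noncomputable section
namespace GroupSync

variable {n d : ℕ}

/-- Frobenius norm of a real matrix. -/
def frob {m k : Type*} [Fintype m] [Fintype k] (X : Matrix m k ℝ) : ℝ :=
  Real.sqrt (∑ i, ∑ j, (X i j) ^ 2)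

/-- Spectral (operator) norm of a real matrix: the operator norm of the induced
linear map between Euclidean spaces. -/
def spec {m k : Type*} [Fintype m] [Fintype k] [DecidableEq k] (X : Matrix m k ℝ) : ℝ :=
  ‖LinearMap.toContinuousLinearMap (Matrix.toEuclideanLin X)‖

/-- Nuclear norm: trace of the positive semidefinite square root of `X * Xᵀ`
(i.e. the sum of the singular values of `X`). -/
def nuclear {m k : Type*} [Fintype m] [Fintype k] [DecidableEq m] (X : Matrix m k ℝ) : ℝ :=
  (((Matrix.posSemidef_self_mul_conjTranspose X).1.eigenvectorUnitary.1 : Matrix m m ℝ) *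
    (Matrix.diagonal ((↑) ∘ (Real.sqrt ·) ∘ (Matrix.posSemidef_self_mul_conjTranspose X).1.eigenvalues) :
      Matrix m m ℝ) *
    (star (Matrix.posSemidef_self_mul_conjTranspose X).1.eigenvectorUnitary : Matrix m m ℝ)).trace

/-- The positive semidefinite square root of `X * Xᵀ`. -/
def psdSqrtMulT {m k : Type*} [Fintype m] [Fintype k] [DecidableEq m] (X : Matrix m k ℝ) :
    Matrix m m ℝ :=
  (Matrix.posSemidef_self_mul_conjTranspose X).1.eigenvectorUnitary.1 *
    Matrix.diagonal ((↑) ∘ (Real.sqrt ·) ∘ (Matrix.posSemidef_self_mul_conjTranspose X).1.eigenvalues) *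
    (star (Matrix.posSemidef_self_mul_conjTranspose X).1.eigenvectorUnitary : Matrix m m ℝ)

/-- Membership in the orthogonal group `O(d)`. -/
def IsOd (g : Matrix (Fin d) (Fin d) ℝ) : Prop :=
  gᵀ * g = 1 ∧ g * gᵀ = 1

/-- Membership in the special orthogonal group `SO(d)`. -/
def IsSOd (g : Matrix (Fin d) (Fin d) ℝ) : Prop :=
  IsOd g ∧ g.det = 1

/-- The `i`-th `d × d` block of an `nd × d` matrix. -/
def blk (X : Matrix (Fin n × Fin d) (Fin d) ℝ) (i : Fin n) : Matrix (Fin d) (Fin d) ℝ :=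
  Matrix.of fun a b => X (i, a) b

/-- Membership in `O(d)^{⊗n}`: every `d × d` block is orthogonal. -/
def OdN (G : Matrix (Fin n × Fin d) (Fin d) ℝ) : Prop :=
  ∀ i : Fin n, IsOd (blk G i)

/-- Membership in `SO(d)^{⊗n}`. -/
def SOdN (G : Matrix (Fin n × Fin d) (Fin d) ℝ) : Prop :=
  ∀ i : Fin n, IsSOd (blk G i)

/-- The `i`-th block column (an `nd × d` matrix) of an `nd × nd` matrix. -/
def bcol (M : Matrix (Fin n × Fin d) (Fin n × Fin d) ℝ) (i : Fin n) :
    Matrix (Fin n × Fin d) (Fin d) ℝ :=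
  Matrix.of fun p b => M p (i, b)

/-- The `ij`-th `d × d` block of an `nd × nd` matrix. -/
def dblk (M : Matrix (Fin n × Fin d) (Fin n × Fin d) ℝ) (i j : Fin n) :
    Matrix (Fin d) (Fin d) ℝ :=
  Matrix.of fun a b => M (i, a) (j, b)

/-- `G' ∈ T_α(G)` (where `Ct = C + α I`): `G' ∈ O(d)^{⊗n}` and each block `G'_i` is a
nearest point of `C̃ᵢᵀ G` in `O(d)` w.r.t. the Frobenius norm. -/
def InT (Ct : Matrix (Fin n × Fin d) (Fin n × Fin d) ℝ)
    (G G' : Matrix (Fin n × Fin d) (Fin d) ℝ) : Prop :=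
  OdN G' ∧ ∀ i : Fin n, ∀ X : Matrix (Fin d) (Fin d) ℝ, IsOd X →
    frob (blk G' i - (bcol Ct i)ᵀ * G) ≤ frob (X - (bcol Ct i)ᵀ * G)

/-- `G' ∈ ST_α(G)`: the `SO(d)` analogue of `InT`. -/
def InST (Ct : Matrix (Fin n × Fin d) (Fin n × Fin d) ℝ)
    (G G' : Matrix (Fin n × Fin d) (Fin d) ℝ) : Prop :=
  SOdN G' ∧ ∀ i : Fin n, ∀ X : Matrix (Fin d) (Fin d) ℝ, IsSOd X →
    frob (blk G' i - (bcol Ct i)ᵀ * G) ≤ frob (X - (bcol Ct i)ᵀ * G)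

/-- The quotient distance `d(X, Y) = min_{g ∈ O(d)} ‖X − Y g‖_F`. -/
def dOrth (X Y : Matrix (Fin n × Fin d) (Fin d) ℝ) : ℝ :=
  ⨅ g : {g : Matrix (Fin d) (Fin d) ℝ // IsOd g}, frob (X - Y * g.1)

/-- The objective function `f(G) = tr(Gᵀ C G)`. -/
def obj (C : Matrix (Fin n × Fin d) (Fin n × Fin d) ℝ)
    (G : Matrix (Fin n × Fin d) (Fin d) ℝ) : ℝ :=
  Matrix.trace (Gᵀ * C * G)

/-- Hadamard (entrywise) product. -/
def had {m k : Type*} (X Y : Matrix m k ℝ) : Matrix m k ℝ :=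
  Matrix.of fun p q => X p q * Y p q

/-- `W ⊗ (1_d 1_dᵀ)`, the Kronecker product of `W` with the all-ones `d × d` matrix. -/
def kron1 (W : Matrix (Fin n) (Fin n) ℝ) : Matrix (Fin n × Fin d) (Fin n × Fin d) ℝ :=
  Matrix.kroneckerMap (· * ·) W (Matrix.of fun (_ _ : Fin d) => (1 : ℝ))

/-- The all-ones matrix `1_m 1_mᵀ`. -/
def onesMat (m : Type*) : Matrix m m ℝ :=
  Matrix.of fun _ _ => (1 : ℝ)

/-- `symblockdiag`: symmetrize the diagonal `d × d` blocks, zero out all other blocks. -/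
def sbd (X : Matrix (Fin n × Fin d) (Fin n × Fin d) ℝ) :
    Matrix (Fin n × Fin d) (Fin n × Fin d) ℝ :=
  Matrix.of fun p q => if p.1 = q.1 then (X p q + X (p.1, q.2) (q.1, p.2)) / 2 else 0

/-- `S(G) = symblockdiag(C G Gᵀ) − C`. -/
def Smat (C : Matrix (Fin n × Fin d) (Fin n × Fin d) ℝ)
    (G : Matrix (Fin n × Fin d) (Fin d) ℝ) : Matrix (Fin n × Fin d) (Fin n × Fin d) ℝ :=
  sbd (C * (G * Gᵀ)) - C

/-- `G` is a second-order critical point of (QP): `S(G) G = 0` and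
`⟨H, S(G) H⟩ ≥ 0` for all tangent directions `H` (blockwise `Hᵢ Gᵢᵀ` skew-symmetric). -/
def IsSOC (C : Matrix (Fin n × Fin d) (Fin n × Fin d) ℝ)
    (G : Matrix (Fin n × Fin d) (Fin d) ℝ) : Prop :=
  Smat C G * G = 0 ∧
  ∀ H : Matrix (Fin n × Fin d) (Fin d) ℝ,
    (∀ i : Fin n, (blk H i * (blk G i)ᵀ)ᵀ = -(blk H i * (blk G i)ᵀ)) →
    0 ≤ Matrix.trace (Hᵀ * (Smat C G * H))

/-- Smallest singular value of a square matrix, as the minimum of `‖M v‖` over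
unit vectors `v`. -/
def sigmaMin (M : Matrix (Fin d) (Fin d) ℝ) : ℝ :=
  ⨅ v : {v : Fin d → ℝ // ∑ a, (v a) ^ 2 = 1}, Real.sqrt (∑ a, (M.mulVec v.1 a) ^ 2)

/-- The singular values of a square matrix: square roots of the eigenvalues of `Mᵀ M`. -/
def singVal (M : Matrix (Fin d) (Fin d) ℝ) (l : Fin d) : ℝ :=
  Real.sqrt ((by simpa using Matrix.isHermitian_conjTranspose_mul_self M : (Mᵀ * M).IsHermitian).eigenvalues l)

/-- Smallest eigenvalue of a (symmetric) matrix, as the minimum Rayleigh quotient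
over unit vectors. -/
def lambdaMin {m : Type*} [Fintype m] (M : Matrix m m ℝ) : ℝ :=
  ⨅ v : {v : m → ℝ // ∑ i, (v i) ^ 2 = 1}, v.1 ⬝ᵥ M.mulVec v.1

/-- `D_α(G)`: block diagonal of the psd square roots of `(C̃ᵢᵀ G)(C̃ᵢᵀ G)ᵀ`, minus `C̃`. -/
def Dmat (Ct : Matrix (Fin n × Fin d) (Fin n × Fin d) ℝ)
    (G : Matrix (Fin n × Fin d) (Fin d) ℝ) : Matrix (Fin n × Fin d) (Fin n × Fin d) ℝ :=
  (Matrix.of fun p q =>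
    if p.1 = q.1 then psdSqrtMulT ((bcol Ct p.1)ᵀ * G) p.2 q.2 else 0) - Ct

/-- The residual function `ρ_α(G) = ‖D_α(G) G‖_F`. -/
def rho (Ct : Matrix (Fin n × Fin d) (Fin n × Fin d) ℝ)
    (G : Matrix (Fin n × Fin d) (Fin d) ℝ) : ℝ :=
  frob (Dmat Ct G * G)

/-- Blockwise infinity norm: `‖X‖_∞ = max_i ‖X_i‖` (spectral norm of the blocks). -/
def binf (X : Matrix (Fin n × Fin d) (Fin d) ℝ) : ℝ :=
  ⨆ i : Fin n, spec (blk X i)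


-- ==================== auxiliary lemmas ====================

lemma trace_tmul {m k : Type*} [Fintype m] [Fintype k] (A B : Matrix m k ℝ) :
    (Aᵀ * B).trace = ∑ q, ∑ p, A p q * B p q := by
  simp [Matrix.trace, Matrix.mul_apply, Matrix.diag]

lemma trace_tmul_le_of_eq {m k : Type*} [Fintype m] [Fintype k] (A B : Matrix m k ℝ)
    (h : (Aᵀ * A).trace = (Bᵀ * B).trace) : (Aᵀ * B).trace ≤ (Bᵀ * B).trace := by
  have cs := Finset.sum_mul_sq_le_sq_mul_sq Finset.univ
    (fun p : m × k => A p.1 p.2) (fun p : m × k => B p.1 p.2)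
  have e1 : ∑ p : m × k, A p.1 p.2 * B p.1 p.2 = (Aᵀ * B).trace := by
    rw [trace_tmul, Fintype.sum_prod_type_right]
  have e2 : ∑ p : m × k, A p.1 p.2 ^ 2 = (Bᵀ * B).trace := by
    rw [← h, trace_tmul, Fintype.sum_prod_type_right]; simp [sq]
  have e3 : ∑ p : m × k, B p.1 p.2 ^ 2 = (Bᵀ * B).trace := by
    rw [trace_tmul, Fintype.sum_prod_type_right]; simp [sq]
  rw [e1, e2, e3] at cs
  have hnn : (0:ℝ) ≤ (Bᵀ * B).trace := by
    rw [← e3]; exact Finset.sum_nonneg fun p _ => sq_nonneg _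
  nlinarith [cs, hnn]

open scoped MatrixOrder in
lemma trace_orthT_mul_le {N Q : Matrix (Fin d) (Fin d) ℝ}
    (hN : N.PosSemidef) (hQ : IsOd Q) : (Qᵀ * N).trace ≤ N.trace := by
  set S := CFC.sqrt N with hSdef
  have hSsymm : Sᵀ = S := by
    have := (CFC.sqrt_nonneg N).posSemidef.1
    rwa [Matrix.IsHermitian, conjTranspose_eq_transpose_of_trivial] at this
  have hSS : S * S = N := CFC.sqrt_mul_sqrt_self N hN.nonneg
  have key : ((Q * S)ᵀ * (Q * S)).trace = (Sᵀ * S).trace := by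
    rw [Matrix.transpose_mul, Matrix.mul_assoc, ← Matrix.mul_assoc Qᵀ Q S, hQ.1, Matrix.one_mul]
  have cs := trace_tmul_le_of_eq (Q * S) S key
  have e : (Qᵀ * N).trace = ((Q * S)ᵀ * S).trace := by
    rw [Matrix.transpose_mul, ← hSS, ← Matrix.mul_assoc, Matrix.trace_mul_cycle, hSsymm]
  have e2 : (Sᵀ * S).trace = N.trace := by rw [hSsymm, hSS]
  rw [e, ← e2]; exact cs

lemma vecMulVec_sq (v : Fin d → ℝ) :
    Matrix.vecMulVec v v * Matrix.vecMulVec v v = (v ⬝ᵥ v) • Matrix.vecMulVec v v := by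
  ext i j
  simp only [Matrix.mul_apply, Matrix.vecMulVec_apply, Matrix.smul_apply, dotProduct,
    smul_eq_mul, Finset.sum_mul]
  exact Finset.sum_congr rfl fun k _ => by ring

lemma trace_vecMulVec_mul (v w : Fin d → ℝ) (M : Matrix (Fin d) (Fin d) ℝ) :
    (Matrix.vecMulVec v w * M).trace = w ⬝ᵥ (M *ᵥ v) := by
  simp only [Matrix.trace, Matrix.diag, Matrix.mul_apply, Matrix.vecMulVec_apply,
    dotProduct, Matrix.mulVec, Finset.mul_sum]
  rw [Finset.sum_comm]
  exact Finset.sum_congr rfl fun k _ => Finset.sum_congr rfl fun i _ => by ring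

lemma quadform_nonneg_of_trace_le {M : Matrix (Fin d) (Fin d) ℝ}
    (h : ∀ Q : Matrix (Fin d) (Fin d) ℝ, IsOd Q → (Qᵀ * M).trace ≤ M.trace)
    (v : Fin d → ℝ) : 0 ≤ v ⬝ᵥ (M *ᵥ v) := by
  rcases eq_or_ne v 0 with rfl | hv
  · simp
  set t := v ⬝ᵥ v with ht'
  have ht : 0 < t := by
    have h1 : t ≠ 0 := by
      rw [ht']; exact fun hc => hv ((dotProduct_self_eq_zero).mp hc)
    have h2 : 0 ≤ t := Finset.sum_nonneg fun i _ => mul_self_nonneg _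
    exact lt_of_le_of_ne h2 (Ne.symm h1)
  set P := Matrix.vecMulVec v v with hP
  set Q := (1 : Matrix (Fin d) (Fin d) ℝ) - (2/t) • P with hQ
  have hPt : Pᵀ = P := by
    ext i j; simp [hP, Matrix.vecMulVec_apply, mul_comm]
  have hQt : Qᵀ = Q := by
    rw [hQ, Matrix.transpose_sub, Matrix.transpose_one, Matrix.transpose_smul, hPt]
  have hQQ : Q * Q = 1 := by
    rw [hQ]
    simp only [Matrix.sub_mul, Matrix.mul_sub, Matrix.one_mul, Matrix.mul_one,
      Matrix.mul_smul, Matrix.smul_mul, vecMulVec_sq, ← ht', smul_sub, smul_smul, hP]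
    have e1 : 2/t * (2/t * t) = 2/t + 2/t := by field_simp; ring
    rw [e1, add_smul]
    abel
  have hQO : IsOd Q := ⟨by rw [hQt]; exact hQQ, by rw [hQt]; exact hQQ⟩
  have htr := h Q hQO
  have e : (Qᵀ * M).trace = M.trace - (2/t) * (v ⬝ᵥ (M *ᵥ v)) := by
    rw [hQt, hQ, Matrix.sub_mul, Matrix.one_mul, Matrix.smul_mul, Matrix.trace_sub,
      Matrix.trace_smul, trace_vecMulVec_mul]
    simp
  rw [e] at htr
  have h2t : 0 < 2/t := by positivity
  nlinarith
lemma stdBasis_transpose (i j : Fin d) (c : ℝ) :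
    (Matrix.single i j c)ᵀ = Matrix.single j i c := by
  ext p q
  simp only [Matrix.transpose_apply, Matrix.single, Matrix.of_apply]
  by_cases h1 : i = q <;> by_cases h2 : j = p <;> simp [h1, h2]

lemma trace_stdBasis_mul (i j : Fin d) (c : ℝ) (M : Matrix (Fin d) (Fin d) ℝ) :
    (Matrix.single i j c * M).trace = c * M j i := by
  rw [Matrix.trace]
  rw [Finset.sum_eq_single i]
  · exact Matrix.single_mul_apply_same c i j i M
  · intro p _ hp
    exact Matrix.single_mul_apply_of_ne c i j p p hp M
  · simp

set_option maxHeartbeats 1000000 in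
lemma transpose_eq_of_trace_le {M : Matrix (Fin d) (Fin d) ℝ}
    (h : ∀ Q : Matrix (Fin d) (Fin d) ℝ, IsOd Q → (Qᵀ * M).trace ≤ M.trace) : Mᵀ = M := by
  ext a b
  rcases eq_or_ne a b with rfl | hab
  · rfl
  show M b a = M a b
  set s : ℝ := M a a + M b b with hs'
  set c : ℝ := M b a - M a b with hc'
  have hsa : M a a = Pi.single a 1 ⬝ᵥ (M *ᵥ (Pi.single a 1 : Fin d → ℝ)) := by
    simp [dotProduct, Matrix.mulVec, Pi.single_apply]
  have hsb : M b b = Pi.single b 1 ⬝ᵥ (M *ᵥ (Pi.single b 1 : Fin d → ℝ)) := by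
    simp [dotProduct, Matrix.mulVec, Pi.single_apply]
  have hs : 0 ≤ s := by
    rw [hs', hsa, hsb]
    exact add_nonneg (quadform_nonneg_of_trace_le h _) (quadform_nonneg_of_trace_le h _)
  have hr2 : (0:ℝ) ≤ s^2 + c^2 := by positivity
  set r : ℝ := Real.sqrt (s^2 + c^2) with hr'
  have hrsq : r^2 = s^2 + c^2 := Real.sq_sqrt hr2
  have hrnn : 0 ≤ r := Real.sqrt_nonneg _
  rcases eq_or_lt_of_le hrnn with hr0 | hrpos
  · have h0 : s^2 + c^2 = 0 := by rw [← hrsq, ← hr0]; ring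
    have hc0 : c = 0 := by nlinarith [sq_nonneg s, sq_nonneg c]
    rw [hc'] at hc0; linarith
  · have hrne : r ≠ 0 := ne_of_gt hrpos
    set u : ℝ := s / r with hu'
    set w : ℝ := c / r with hw'
    have hscalar : u^2 + w^2 = 1 := by
      rw [hu', hw', div_pow, div_pow, ← add_div, ← hrsq, div_self (by positivity)]
    have huswc : u * s + w * c = r := by
      rw [hu', hw']
      field_simp
      linear_combination -hrsq
    set Eaa := Matrix.single a a (1:ℝ) with hEaa
    set Ebb := Matrix.single b b (1:ℝ) with hEbb
    set Eab := Matrix.single a b (1:ℝ) with hEab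
    set Eba := Matrix.single b a (1:ℝ) with hEba
    set F := Eaa + Ebb with hF
    set K := Eba - Eab with hK
    have pFF : F * F = F := by
      rw [hF, hEaa, hEbb]
      rw [add_mul, mul_add, mul_add,
        Matrix.single_mul_single_same, Matrix.single_mul_single_same,
        Matrix.single_mul_single_of_ne _ _ _ _ hab, Matrix.single_mul_single_of_ne _ _ _ _ hab.symm]
      simp
    have pFK : F * K = K := by
      rw [hF, hK, hEaa, hEbb, hEba, hEab]
      rw [add_mul, mul_sub, mul_sub,
        Matrix.single_mul_single_same, Matrix.single_mul_single_same,
        Matrix.single_mul_single_of_ne _ _ _ _ hab, Matrix.single_mul_single_of_ne _ _ _ _ hab.symm]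
      simp
      try abel
    have pKF : K * F = K := by
      rw [hF, hK, hEaa, hEbb, hEba, hEab]
      rw [sub_mul, mul_add, mul_add,
        Matrix.single_mul_single_same, Matrix.single_mul_single_same,
        Matrix.single_mul_single_of_ne _ _ _ _ hab, Matrix.single_mul_single_of_ne _ _ _ _ hab.symm]
      simp
      try abel
    have pKK : K * K = -F := by
      rw [hF, hK, hEaa, hEbb, hEba, hEab]
      rw [sub_mul, mul_sub, mul_sub,
        Matrix.single_mul_single_same, Matrix.single_mul_single_same,
        Matrix.single_mul_single_of_ne _ _ _ _ hab, Matrix.single_mul_single_of_ne _ _ _ _ hab.symm]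
      simp
      try abel
    have hFt : Fᵀ = F := by
      rw [hF, Matrix.transpose_add, hEaa, hEbb, stdBasis_transpose, stdBasis_transpose]
    have hKt : Kᵀ = -K := by
      rw [hK, Matrix.transpose_sub, hEba, hEab, stdBasis_transpose, stdBasis_transpose]
      abel
    set A := (u - 1) • F + w • K with hA
    set Q := 1 + A with hQ
    have hAt : Aᵀ = (u - 1) • F - w • K := by
      rw [hA, Matrix.transpose_add, Matrix.transpose_smul, Matrix.transpose_smul, hFt, hKt,
        smul_neg, ← sub_eq_add_neg]
    have hAtA : Aᵀ * A = ((1-u) + (1-u)) • F := by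
      rw [hAt, hA, Matrix.sub_mul, Matrix.mul_add, Matrix.mul_add]
      simp only [Matrix.smul_mul, Matrix.mul_smul, pFF, pFK, pKF, pKK, smul_smul, smul_neg]
      have h1 : (u-1)*(u-1) = ((1-u)+(1-u)) - w*w := by linear_combination hscalar
      have h2 : w*(u-1) = (u-1)*w := mul_comm _ _
      rw [h1, h2, sub_smul]
      abel
    have hAAt : A * Aᵀ = ((1-u) + (1-u)) • F := by
      rw [hAt, hA, Matrix.mul_sub, Matrix.add_mul, Matrix.add_mul]
      simp only [Matrix.smul_mul, Matrix.mul_smul, pFF, pFK, pKF, pKK, smul_smul, smul_neg]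
      have h1 : (u-1)*(u-1) = ((1-u)+(1-u)) - w*w := by linear_combination hscalar
      have h2 : w*(u-1) = (u-1)*w := mul_comm _ _
      rw [h1, h2, sub_smul]
      abel
    have hApAt : Aᵀ + A = (-((1-u) + (1-u))) • F := by
      rw [hAt, hA]
      module
    have hQO : IsOd Q := by
      constructor
      · rw [hQ, Matrix.transpose_add, Matrix.transpose_one]
        simp only [Matrix.add_mul, Matrix.mul_add, Matrix.one_mul, Matrix.mul_one]
        rw [hAtA]
        have hz : Aᵀ + A + ((1-u) + (1-u)) • F = 0 := by
          rw [hApAt]; module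
        calc 1 + Aᵀ + (A + ((1-u) + (1-u)) • F)
            = 1 + (Aᵀ + A + ((1-u) + (1-u)) • F) := by abel
          _ = 1 := by rw [hz, add_zero]
      · rw [hQ, Matrix.transpose_add, Matrix.transpose_one]
        simp only [Matrix.add_mul, Matrix.mul_add, Matrix.one_mul, Matrix.mul_one]
        rw [hAAt]
        have hz : Aᵀ + A + ((1-u) + (1-u)) • F = 0 := by
          rw [hApAt]; module
        calc 1 + A + (Aᵀ + ((1-u) + (1-u)) • F)
            = 1 + (Aᵀ + A + ((1-u) + (1-u)) • F) := by abel
          _ = 1 := by rw [hz, add_zero]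
    have htr := h Q hQO
    have eFM : (F * M).trace = s := by
      rw [hF, hEaa, hEbb, Matrix.add_mul, Matrix.trace_add, trace_stdBasis_mul,
        trace_stdBasis_mul, hs']
      ring
    have eKM : (K * M).trace = -c := by
      rw [hK, hEba, hEab, Matrix.sub_mul, Matrix.trace_sub, trace_stdBasis_mul,
        trace_stdBasis_mul, hc']
      ring
    have etr : (Qᵀ * M).trace = M.trace + ((u-1) * s - w * (-c)) := by
      rw [hQ, Matrix.transpose_add, Matrix.transpose_one, Matrix.add_mul, Matrix.one_mul,
        Matrix.trace_add, hAt, Matrix.sub_mul, Matrix.smul_mul, Matrix.smul_mul,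
        Matrix.trace_sub, Matrix.trace_smul, Matrix.trace_smul, eFM, eKM]
      simp
    rw [etr] at htr
    have hkey : r ≤ s := by
      have : u * s + w * c ≤ s := by linarith
      rw [huswc] at this
      exact this
    have hc2 : c^2 ≤ 0 := by nlinarith [hrsq]
    have hc0 : c = 0 := by nlinarith [sq_nonneg c]
    rw [hc'] at hc0; linarith

lemma posSemidef_of_trace_orth_le {M : Matrix (Fin d) (Fin d) ℝ}
    (h : ∀ Q : Matrix (Fin d) (Fin d) ℝ, IsOd Q → (Qᵀ * M).trace ≤ M.trace) :
    M.PosSemidef := by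
  refine Matrix.PosSemidef.of_dotProduct_mulVec_nonneg ?_ ?_
  · rw [Matrix.IsHermitian, conjTranspose_eq_transpose_of_trivial]
    exact transpose_eq_of_trace_le h
  · intro x
    simpa using quadform_nonneg_of_trace_le h x

lemma IsOd.mulOd {d : ℕ} {X Y : Matrix (Fin d) (Fin d) ℝ} (hX : IsOd X) (hY : IsOd Y) :
    IsOd (X * Y) := by
  constructor
  · rw [Matrix.transpose_mul, Matrix.mul_assoc, ← Matrix.mul_assoc Xᵀ X Y, hX.1,
      Matrix.one_mul, hY.1]
  · rw [Matrix.transpose_mul, Matrix.mul_assoc, ← Matrix.mul_assoc Y Yᵀ Xᵀ, hY.2,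
      Matrix.one_mul, hX.2]

lemma IsOd.transposeOd {d : ℕ} {X : Matrix (Fin d) (Fin d) ℝ} (hX : IsOd X) : IsOd Xᵀ := by
  refine ⟨?_, ?_⟩ <;> rw [Matrix.transpose_transpose]
  exacts [hX.2, hX.1]

/-- The embedding of a `d × d` matrix into block row `i` of an `nd × d` matrix. -/
def emb {n d : ℕ} (i : Fin n) (Z : Matrix (Fin d) (Fin d) ℝ) :
    Matrix (Fin n × Fin d) (Fin d) ℝ :=
  Matrix.of fun p b => if p.1 = i then Z p.2 b else 0

lemma blk_emb {n d : ℕ} (i j : Fin n) (Z : Matrix (Fin d) (Fin d) ℝ) :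
    blk (emb i Z) j = if j = i then Z else 0 := by
  ext a b
  by_cases h : j = i <;> simp [blk, emb, h]

lemma blk_add {n d : ℕ} (X Y : Matrix (Fin n × Fin d) (Fin d) ℝ) (i : Fin n) :
    blk (X + Y) i = blk X i + blk Y i := rfl

lemma trace_emb_mul {n d : ℕ} (i : Fin n) (Z : Matrix (Fin d) (Fin d) ℝ)
    (Y : Matrix (Fin n × Fin d) (Fin d) ℝ) :
    ((emb i Z)ᵀ * Y).trace = (Zᵀ * blk Y i).trace := by
  rw [trace_tmul, trace_tmul]
  refine Finset.sum_congr rfl fun b _ => ?_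
  rw [Fintype.sum_prod_type, Finset.sum_comm]
  refine Finset.sum_congr rfl fun a _ => ?_
  simp [emb, blk, ite_mul]

lemma blk_mul_left {n d : ℕ} (C : Matrix (Fin n × Fin d) (Fin n × Fin d) ℝ)
    (hCsymm : Cᵀ = C) (Y : Matrix (Fin n × Fin d) (Fin d) ℝ) (i : Fin n) :
    blk (C * Y) i = (bcol C i)ᵀ * Y := by
  ext a b
  simp only [blk, bcol, Matrix.mul_apply, Matrix.of_apply, Matrix.transpose_apply]
  refine Finset.sum_congr rfl fun q _ => ?_
  rw [show C q (i, a) = Cᵀ (i, a) q from rfl, hCsymm]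

lemma blk_mul_emb {n d : ℕ} (C : Matrix (Fin n × Fin d) (Fin n × Fin d) ℝ)
    (i : Fin n) (Z : Matrix (Fin d) (Fin d) ℝ) :
    blk (C * emb i Z) i = dblk C i i * Z := by
  ext a b
  simp only [blk, dblk, Matrix.mul_apply, Matrix.of_apply]
  rw [Fintype.sum_prod_type, Finset.sum_comm]
  refine Finset.sum_congr rfl fun k _ => ?_
  simp [emb, mul_ite]

lemma obj_add_emb {n d : ℕ} (C : Matrix (Fin n × Fin d) (Fin n × Fin d) ℝ)
    (hCsymm : Cᵀ = C) (G : Matrix (Fin n × Fin d) (Fin d) ℝ) (i : Fin n)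
    (Z : Matrix (Fin d) (Fin d) ℝ) :
    obj C (G + emb i Z) = obj C G + 2 * (Zᵀ * ((bcol C i)ᵀ * G)).trace
      + (Zᵀ * (dblk C i i * Z)).trace := by
  set E := emb i Z with hE
  have cross : (Gᵀ * (C * E)).trace = (Eᵀ * (C * G)).trace := by
    rw [← Matrix.trace_transpose (Gᵀ * (C * E)), Matrix.transpose_mul, Matrix.transpose_mul,
      Matrix.transpose_transpose, hCsymm, Matrix.mul_assoc]
  have e1 : (Eᵀ * (C * G)).trace = (Zᵀ * ((bcol C i)ᵀ * G)).trace := by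
    rw [trace_emb_mul, blk_mul_left C hCsymm]
  have e2 : (Eᵀ * (C * E)).trace = (Zᵀ * (dblk C i i * Z)).trace := by
    rw [trace_emb_mul, blk_mul_emb]
  have expand : obj C (G + E) = obj C G + (Gᵀ * (C * E)).trace + (Eᵀ * (C * G)).trace
      + (Eᵀ * (C * E)).trace := by
    unfold obj
    rw [Matrix.transpose_add, Matrix.add_mul, Matrix.add_mul, Matrix.mul_add, Matrix.mul_add,
      Matrix.trace_add, Matrix.trace_add, Matrix.trace_add]
    simp only [Matrix.mul_assoc]
    ring
  rw [expand, cross, e1, e2]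
  ring

lemma posSemidef_smul_one {d : ℕ} {α : ℝ} (hα : 0 ≤ α) :
    (α • (1 : Matrix (Fin d) (Fin d) ℝ)).PosSemidef := by
  refine Matrix.PosSemidef.of_dotProduct_mulVec_nonneg ?_ ?_
  · rw [Matrix.IsHermitian, conjTranspose_eq_transpose_of_trivial, Matrix.transpose_smul,
      Matrix.transpose_one]
  · intro x
    have : star x ⬝ᵥ (α • (1 : Matrix (Fin d) (Fin d) ℝ)) *ᵥ x = α * (x ⬝ᵥ x) := by
      simp [Matrix.smul_mulVec, Matrix.one_mulVec, dotProduct_smul]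
    rw [this]
    exact mul_nonneg hα (Finset.sum_nonneg fun j _ => mul_self_nonneg _)

lemma frob_sub_le {d : ℕ} {P X B : Matrix (Fin d) (Fin d) ℝ}
    (hP : Pᵀ * P = 1) (hX : Xᵀ * X = 1)
    (htr : (Xᵀ * B).trace ≤ (Pᵀ * B).trace) :
    frob (P - B) ≤ frob (X - B) := by
  unfold frob
  apply Real.sqrt_le_sqrt
  have key : ∀ Y : Matrix (Fin d) (Fin d) ℝ, Yᵀ * Y = 1 →
      ∑ a, ∑ b, ((Y - B) a b) ^ 2
        = (Fintype.card (Fin d) : ℝ) - 2 * (Yᵀ * B).trace + ∑ a, ∑ b, (B a b) ^ 2 := by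
    intro Y hY
    have h1 : ∑ a, ∑ b, (Y a b) ^ 2 = (Fintype.card (Fin d) : ℝ) := by
      have := trace_tmul Y Y
      rw [hY] at this
      rw [Finset.sum_comm]
      simp only [Matrix.trace_one] at this
      rw [this]
      refine Finset.sum_congr rfl fun q _ => Finset.sum_congr rfl fun p _ => (sq _)
    have h2 : ∑ a, ∑ b, Y a b * B a b = (Yᵀ * B).trace := by
      rw [trace_tmul, Finset.sum_comm]
    calc ∑ a, ∑ b, ((Y - B) a b) ^ 2
        = ∑ a, ∑ b, ((Y a b) ^ 2 - 2 * (Y a b * B a b) + (B a b) ^ 2) := by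
          refine Finset.sum_congr rfl fun a _ => Finset.sum_congr rfl fun b _ => ?_
          rw [Matrix.sub_apply]; ring
      _ = (∑ a, ∑ b, (Y a b) ^ 2) - 2 * (∑ a, ∑ b, Y a b * B a b)
            + ∑ a, ∑ b, (B a b) ^ 2 := by
          rw [Finset.mul_sum]
          rw [← Finset.sum_sub_distrib, ← Finset.sum_add_distrib]
          refine Finset.sum_congr rfl fun a _ => ?_
          rw [Finset.mul_sum, ← Finset.sum_sub_distrib, ← Finset.sum_add_distrib]
      _ = _ := by rw [h1, h2]
  rw [key P hP, key X hX]
  linarith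

/-- global maximizers are fixed points.
Assume `C` is symmetric with positive semidefinite diagonal blocks `C_{ii}`, and let
`Ĝ ∈ O(d)^{⊗n}` be a global maximizer of (QP). Then `Cᵢᵀ Ĝ Ĝᵢᵀ − C_{ii}` is positive
semidefinite for every `i`, and `Ĝ ∈ T_α(Ĝ)` for every `α ≥ 0`. -/
theorem global_maximizer_is_fixed_point {n d : ℕ}
    (C : Matrix (Fin n × Fin d) (Fin n × Fin d) ℝ) (hCsymm : Cᵀ = C)
    (hCdiag : ∀ i : Fin n, (dblk C i i).PosSemidef)
    (Gh : Matrix (Fin n × Fin d) (Fin d) ℝ) (hGh : OdN Gh)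
    (hmax : ∀ G : Matrix (Fin n × Fin d) (Fin d) ℝ, OdN G → obj C G ≤ obj C Gh) :
    (∀ i : Fin n, ((bcol C i)ᵀ * Gh * (blk Gh i)ᵀ - dblk C i i).PosSemidef) ∧
    (∀ α : ℝ, 0 ≤ α →
      InT (C + α • (1 : Matrix (Fin n × Fin d) (Fin n × Fin d) ℝ)) Gh Gh) := by
  have key : ∀ i : Fin n, ∀ Q : Matrix (Fin d) (Fin d) ℝ, IsOd Q →
      (Qᵀ * ((bcol C i)ᵀ * Gh * (blk Gh i)ᵀ - dblk C i i)).trace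
        ≤ ((bcol C i)ᵀ * Gh * (blk Gh i)ᵀ - dblk C i i).trace := by
    intro i Q hQ
    have hPO : IsOd (blk Gh i) := hGh i
    set P := blk Gh i with hPdef
    set Z := (Q - 1) * P with hZ
    have hG'O : OdN (Gh + emb i Z) := by
      intro j
      rw [blk_add, blk_emb]
      by_cases h : j = i
      · subst h
        simp only [if_pos rfl, if_true]
        have e : blk Gh j + Z = Q * P := by
          rw [hZ, Matrix.sub_mul, Matrix.one_mul, ← hPdef]
          abel
        rw [e]
        exact hQ.mulOd hPO
      · simp only [if_neg h, add_zero]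
        exact hGh j
    have hobj := hmax _ hG'O
    rw [obj_add_emb C hCsymm Gh i Z] at hobj
    set B := (bcol C i)ᵀ * Gh with hB
    set Cii := dblk C i i with hCii
    have hCiiT : Ciiᵀ = Cii := by
      ext a b
      show C (i, b) (i, a) = C (i, a) (i, b)
      rw [show C (i, b) (i, a) = Cᵀ (i, a) (i, b) from rfl, hCsymm]
    have trCQ : (Cii * Q).trace = (Qᵀ * Cii).trace := by
      rw [← Matrix.trace_transpose (Qᵀ * Cii), Matrix.transpose_mul, Matrix.transpose_transpose,
        hCiiT, Matrix.trace_mul_comm]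
    have t1 : (Zᵀ * B).trace = (Qᵀ * (B * Pᵀ)).trace - (B * Pᵀ).trace := by
      rw [hZ, Matrix.transpose_mul, Matrix.transpose_sub, Matrix.transpose_one,
        Matrix.mul_assoc, Matrix.trace_mul_comm, Matrix.mul_assoc, Matrix.sub_mul,
        Matrix.one_mul, Matrix.trace_sub]
    have t2 : (Zᵀ * (Cii * Z)).trace = 2 * Cii.trace - 2 * (Qᵀ * Cii).trace := by
      rw [hZ, Matrix.transpose_mul, Matrix.transpose_sub, Matrix.transpose_one,
        Matrix.mul_assoc, Matrix.trace_mul_comm]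
      have assoc1 : (Qᵀ - 1) * (Cii * ((Q - 1) * P)) * Pᵀ
          = (Qᵀ - 1) * (Cii * (Q - 1)) * (P * Pᵀ) := by
        simp only [Matrix.mul_assoc]
      rw [assoc1, hPO.2, Matrix.mul_one]
      simp only [Matrix.sub_mul, Matrix.mul_sub, Matrix.one_mul, Matrix.mul_one,
        Matrix.trace_sub]
      have e3 : (Qᵀ * (Cii * Q)).trace = Cii.trace := by
        rw [Matrix.trace_mul_comm, Matrix.mul_assoc, hQ.2, Matrix.mul_one]
      rw [e3, trCQ]
      ring
    rw [t1, t2] at hobj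
    rw [Matrix.mul_sub, Matrix.trace_sub, Matrix.trace_sub]
    linarith
  have part1 : ∀ i : Fin n, ((bcol C i)ᵀ * Gh * (blk Gh i)ᵀ - dblk C i i).PosSemidef :=
    fun i => posSemidef_of_trace_orth_le (key i)
  refine ⟨part1, fun α hα => ⟨hGh, fun i X hX => ?_⟩⟩
  have hPO : IsOd (blk Gh i) := hGh i
  set P := blk Gh i with hPdef
  set B := (bcol C i)ᵀ * Gh with hB
  have hBt : (bcol (C + α • (1 : Matrix (Fin n × Fin d) (Fin n × Fin d) ℝ)) i)ᵀ * Gh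
      = B + α • P := by
    ext a b
    simp only [hB, hPdef, blk, bcol, Matrix.mul_apply, Matrix.transpose_apply,
      Matrix.add_apply, Matrix.smul_apply, Matrix.one_apply, Matrix.of_apply,
      smul_eq_mul, mul_ite, mul_one, mul_zero, add_mul, ite_mul, zero_mul,
      Finset.sum_add_distrib, Finset.sum_ite_eq]
    simp
  set Bt := B + α • P with hBtdef
  have hNeq : Bt * Pᵀ = (B * Pᵀ - dblk C i i) + (dblk C i i + α • (1 : Matrix (Fin d) (Fin d) ℝ)) := by
    rw [hBtdef, Matrix.add_mul, Matrix.smul_mul, hPO.2]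
    abel
  have hNpsd : (Bt * Pᵀ).PosSemidef := by
    rw [hNeq]
    exact (part1 i).add ((hCdiag i).add (posSemidef_smul_one hα))
  have htr : (Xᵀ * Bt).trace ≤ (Pᵀ * Bt).trace := by
    have hQO : IsOd (X * Pᵀ) := hX.mulOd hPO.transposeOd
    have h1 := trace_orthT_mul_le hNpsd hQO
    have e1 : ((X * Pᵀ)ᵀ * (Bt * Pᵀ)).trace = (Xᵀ * Bt).trace := by
      rw [Matrix.transpose_mul, Matrix.transpose_transpose, Matrix.mul_assoc,
        Matrix.trace_mul_comm]
      have assoc2 : Xᵀ * (Bt * Pᵀ) * P = Xᵀ * (Bt * (Pᵀ * P)) := by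
        simp only [Matrix.mul_assoc]
      rw [assoc2, hPO.1, Matrix.mul_one]
    have e2 : (Bt * Pᵀ).trace = (Pᵀ * Bt).trace := Matrix.trace_mul_comm _ _
    rw [e1, e2] at h1
    exact h1
  show frob (P - _) ≤ frob (X - _)
  rw [hBt]
  exact frob_sub_le hPO.1 hX.1 htr
end GroupSync
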